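/- For the Gamma(τa,1) prior with Gaussian observation as above, if τa < 1/2 and λ ≠ γ̄a, then as |λ − γ̄a| → 0 the conditional expectation E[Γ | Λ = λ] converges to (Γ(τa + 1/2)/Γ(1/2 − τa)) · (2σ²)^{2τa} / (2σ² + μ²)^{(2τa+1)/2} · |λ − γ̄a|^{1−2τa} · (1 + o(1)), while if τa > 1/2 it converges to (τa − 1/2) · 2σ²/(2σ² + μ²). -/

import Mathlib

open MeasureTheory Real Set Filter Topology

/-- Joint density of `(Λ, Γ)` at `(λ, g)` in the hierarchical model
`Γ ~ Gamma(τa, 1)`, `Λ | Γ = g ~ N(γ̄a + μg, σ²g)`. -/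
noncomputable def jointDensity (τ a γbar μ σ lam g : ℝ) : ℝ :=
  Real.exp (-(lam - γbar * a - μ * g) ^ 2 / (2 * σ ^ 2 * g)) /
      Real.sqrt (2 * π * σ ^ 2 * g) *
    (g ^ (τ * a - 1) * Real.exp (-g) / Real.Gamma (τ * a))

/-- The conditional expectation `E[Γ | Λ = λ]`. -/
noncomputable def condMeanGamma (τ a γbar μ σ lam : ℝ) : ℝ :=
  (∫ g in Ioi (0 : ℝ), g * jointDensity τ a γbar μ σ lam g) /
    ∫ g in Ioi (0 : ℝ), jointDensity τ a γbar μ σ lam g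

lemma auxIntegrableBound {p c : ℝ} (hp : -1 < p) (hc : 0 < c) :
    IntegrableOn (fun g : ℝ => g ^ p * Real.exp (-(c * g))) (Ioi 0) := by
  refine (integrableOn_rpow_mul_exp_neg_mul_rpow hp one_pos hc).congr_fun
    (fun x hx => ?_) measurableSet_Ioi
  beta_reduce
  rw [Real.rpow_one, neg_mul]

lemma tendstoJ {α : Type*} {l : Filter α} [l.IsCountablyGenerated] {φ : α → ℝ}
    (hφ0 : ∀ i, 0 ≤ φ i) (hφ : Tendsto φ l (𝓝 0)) {p c : ℝ} (hp : -1 < p) (hc : 0 < c) :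
    Tendsto (fun i => ∫ g in Ioi (0:ℝ), g ^ p * Real.exp (-(φ i / g) - c * g)) l
      (𝓝 (Real.Gamma (p + 1) * (1 / c) ^ (p + 1))) := by
  have hval : ∫ g in Ioi (0:ℝ), g ^ p * Real.exp (-(c * g))
      = Real.Gamma (p + 1) * (1 / c) ^ (p + 1) := by
    have := integral_rpow_mul_exp_neg_mul_Ioi (show (0:ℝ) < p + 1 by linarith) hc
    simp only [add_sub_cancel_right] at this
    rw [this, mul_comm]
  rw [← hval]
  apply tendsto_integral_filter_of_dominated_convergence
      (fun g => g ^ p * Real.exp (-(c * g)))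
  · filter_upwards with i
    apply Measurable.aestronglyMeasurable
    fun_prop
  · filter_upwards with i
    filter_upwards [ae_restrict_mem measurableSet_Ioi] with g hg
    have hg0 : (0:ℝ) < g := hg
    rw [Real.norm_eq_abs, abs_of_nonneg (by positivity)]
    have h1 : 0 ≤ φ i / g := div_nonneg (hφ0 i) hg0.le
    gcongr
    · linarith
  · exact auxIntegrableBound hp hc
  · filter_upwards [ae_restrict_mem measurableSet_Ioi] with g hg
    have hg0 : (0:ℝ) < g := hg
    have h1 : Tendsto (fun i => -(φ i / g) - c * g) l (𝓝 (-((0:ℝ) / g) - c * g)) :=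
      ((hφ.div_const g).neg).sub tendsto_const_nhds
    have h2 := ((Real.continuous_exp.tendsto _).comp h1).const_mul (g ^ p)
    simpa using h2

lemma auxIntegrableBound2 {q : ℝ} (hq : q < -1) :
    IntegrableOn (fun u : ℝ => u ^ q * Real.exp (-(1 / u))) (Ioi 0) := by
  rw [← integrableOn_Ioi_comp_rpow_iff _ (show (-1:ℝ) ≠ 0 by norm_num)]
  refine (Real.GammaIntegral_convergent (show (0:ℝ) < -q - 1 by linarith)).congr_fun
    (fun x hx => ?_) measurableSet_Ioi
  have hx0 : (0:ℝ) < x := hx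
  rw [smul_eq_mul, Real.rpow_neg_one, Real.inv_rpow hx0.le, ← Real.rpow_neg hx0.le,
    one_div, inv_inv, abs_neg, abs_one, one_mul]
  beta_reduce
  rw [show (-1:ℝ) - 1 = -2 by norm_num, show -q - 1 - 1 = -q + -2 by ring,
    Real.rpow_add hx0]
  ring

lemma auxGammaVal {q : ℝ} (hq : q < -1) :
    ∫ u in Ioi (0:ℝ), u ^ q * Real.exp (-(1 / u)) = Real.Gamma (-q - 1) := by
  rw [Real.Gamma_eq_integral (show (0:ℝ) < -q - 1 by linarith)]
  rw [← integral_comp_rpow_Ioi (fun u => u ^ q * Real.exp (-(1 / u)))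
    (show (-1:ℝ) ≠ 0 by norm_num)]
  refine (setIntegral_congr_fun measurableSet_Ioi (fun x hx => ?_)).symm
  have hx0 : (0:ℝ) < x := hx
  rw [smul_eq_mul, Real.rpow_neg_one, Real.inv_rpow hx0.le, ← Real.rpow_neg hx0.le,
    one_div, inv_inv, abs_neg, abs_one, one_mul]
  rw [show (-1:ℝ) - 1 = -2 by norm_num, show -q - 1 - 1 = -q + -2 by ring,
    Real.rpow_add hx0]
  ring

lemma tendstoG {α : Type*} {l : Filter α} [l.IsCountablyGenerated] {ψ : α → ℝ}
    (hψ0 : ∀ i, 0 ≤ ψ i) (hψ : Tendsto ψ l (𝓝 0)) {q : ℝ} (hq : q < -1) :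
    Tendsto (fun i => ∫ u in Ioi (0:ℝ), u ^ q * Real.exp (-(1 / u) - ψ i * u)) l
      (𝓝 (Real.Gamma (-q - 1))) := by
  rw [← auxGammaVal hq]
  apply tendsto_integral_filter_of_dominated_convergence
      (fun u => u ^ q * Real.exp (-(1 / u)))
  · filter_upwards with i
    apply Measurable.aestronglyMeasurable
    fun_prop
  · filter_upwards with i
    filter_upwards [ae_restrict_mem measurableSet_Ioi] with u hu
    have hu0 : (0:ℝ) < u := hu
    rw [Real.norm_eq_abs, abs_of_nonneg (by positivity)]
    have h1 : 0 ≤ ψ i * u := mul_nonneg (hψ0 i) hu0.le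
    gcongr
    · linarith
  · exact auxIntegrableBound2 hq
  · filter_upwards [ae_restrict_mem measurableSet_Ioi] with u hu
    have hu0 : (0:ℝ) < u := hu
    have h1 : Tendsto (fun i => -(1 / u) - ψ i * u) l (𝓝 (-(1 / u) - 0 * u)) :=
      tendsto_const_nhds.sub (hψ.mul_const u)
    have h2 := ((Real.continuous_exp.tendsto _).comp h1).const_mul (u ^ q)
    simpa using h2

lemma jointDensity_eq (τ a γbar μ σ : ℝ) (hσ : 0 < σ) (hΓ : Real.Gamma (τ * a) ≠ 0)
    (lam : ℝ) {g : ℝ} (hg : 0 < g) :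
    jointDensity τ a γbar μ σ lam g
      = (Real.exp ((lam - γbar * a) * μ / σ ^ 2) / (Real.sqrt (2 * π * σ ^ 2) * Real.Gamma (τ * a)))
        * (g ^ (τ * a - 3/2) *
            Real.exp (-((lam - γbar * a) ^ 2 / (2 * σ ^ 2) / g)
              - (2 * σ ^ 2 + μ ^ 2) / (2 * σ ^ 2) * g)) := by
  have h2πσ : (0:ℝ) < 2 * π * σ ^ 2 := by positivity
  have hA : (0:ℝ) < Real.sqrt (2 * π * σ ^ 2) := Real.sqrt_pos.mpr h2πσ
  have hg12 : (0:ℝ) < g ^ ((1:ℝ)/2) := Real.rpow_pos_of_pos hg _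
  have hexp : Real.exp (-(lam - γbar * a - μ * g) ^ 2 / (2 * σ ^ 2 * g)) * Real.exp (-g)
      = Real.exp ((lam - γbar * a) * μ / σ ^ 2) *
          Real.exp (-((lam - γbar * a) ^ 2 / (2 * σ ^ 2) / g)
            - (2 * σ ^ 2 + μ ^ 2) / (2 * σ ^ 2) * g) := by
    rw [← Real.exp_add, ← Real.exp_add]
    congr 1
    field_simp
    ring
  unfold jointDensity
  rw [Real.sqrt_mul h2πσ.le g,
    show Real.sqrt g = g ^ ((1:ℝ)/2) from Real.sqrt_eq_rpow g,
    show g ^ (τ * a - 1) = g ^ (τ * a - 3/2) * g ^ ((1:ℝ)/2) by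
      rw [← Real.rpow_add hg]; congr 1; ring]
  rw [div_mul_div_comm, div_mul_eq_mul_div,
    div_eq_div_iff (mul_ne_zero (mul_ne_zero hA.ne' hg12.ne') hΓ)
      (mul_ne_zero hA.ne' hΓ)]
  linear_combination (Real.sqrt (2 * π * σ ^ 2) * Real.Gamma (τ * a) *
    (g ^ (τ * a - 3/2) * g ^ ((1:ℝ)/2))) * hexp

noncomputable def Jf (p c b : ℝ) : ℝ := ∫ g in Ioi (0:ℝ), g ^ p * Real.exp (-(b / g) - c * g)

noncomputable def Gf (p c b : ℝ) : ℝ :=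
  ∫ u in Ioi (0:ℝ), u ^ p * Real.exp (-(1 / u) - c * b * u)

lemma Jf_decomp (p c : ℝ) {b : ℝ} (hb : 0 < b) : Jf p c b = b ^ (p + 1) * Gf p c b := by
  have h := integral_comp_mul_left_Ioi
    (fun g => g ^ p * Real.exp (-(b / g) - c * g)) 0 hb
  simp only [mul_zero, smul_eq_mul] at h
  have h2 : ∫ x in Ioi (0:ℝ), (b * x) ^ p * Real.exp (-(b / (b * x)) - c * (b * x))
      = b ^ p * Gf p c b := by
    unfold Gf
    rw [← integral_const_mul]
    refine setIntegral_congr_fun measurableSet_Ioi (fun x hx => ?_)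
    have hx0 : (0:ℝ) < x := hx
    have hbb : b / (b * x) = 1 / x := by
      field_simp
    rw [Real.mul_rpow hb.le hx0.le, hbb, show c * (b * x) = c * b * x by ring]
    ring
  rw [h2] at h
  have hJ : Jf p c b = b * (b ^ p * Gf p c b) := by
    unfold Jf
    rw [h, ← mul_assoc, mul_inv_cancel₀ hb.ne', one_mul]
  rw [hJ, Real.rpow_add hb, Real.rpow_one]
  ring

lemma condMean_eq (τ a γbar μ σ : ℝ) (hτ : 0 < τ) (ha : 0 < a) (hσ : 0 < σ) (lam : ℝ) :
    condMeanGamma τ a γbar μ σ lam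
      = Jf (τ * a - 1/2) ((2 * σ ^ 2 + μ ^ 2) / (2 * σ ^ 2)) ((lam - γbar * a) ^ 2 / (2 * σ ^ 2)) /
        Jf (τ * a - 3/2) ((2 * σ ^ 2 + μ ^ 2) / (2 * σ ^ 2)) ((lam - γbar * a) ^ 2 / (2 * σ ^ 2)) := by
  have ht : 0 < τ * a := mul_pos hτ ha
  have hΓt : 0 < Real.Gamma (τ * a) := Real.Gamma_pos_of_pos ht
  have hCpos : (0:ℝ) < Real.exp ((lam - γbar * a) * μ / σ ^ 2) /
      (Real.sqrt (2 * π * σ ^ 2) * Real.Gamma (τ * a)) := by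
    have h2πσ : (0:ℝ) < Real.sqrt (2 * π * σ ^ 2) :=
      Real.sqrt_pos.mpr (by positivity)
    exact div_pos (Real.exp_pos _) (mul_pos h2πσ hΓt)
  have hNum : (∫ g in Ioi (0:ℝ), g * jointDensity τ a γbar μ σ lam g)
      = (Real.exp ((lam - γbar * a) * μ / σ ^ 2) /
          (Real.sqrt (2 * π * σ ^ 2) * Real.Gamma (τ * a))) *
        Jf (τ * a - 1/2) ((2 * σ ^ 2 + μ ^ 2) / (2 * σ ^ 2))
          ((lam - γbar * a) ^ 2 / (2 * σ ^ 2)) := by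
    unfold Jf
    rw [← integral_const_mul]
    refine setIntegral_congr_fun measurableSet_Ioi (fun g hg => ?_)
    have hg0 : (0:ℝ) < g := hg
    rw [jointDensity_eq τ a γbar μ σ hσ hΓt.ne' lam hg0,
      show g ^ (τ * a - 1/2) = g * g ^ (τ * a - 3/2) by
        rw [show τ * a - 1/2 = 1 + (τ * a - 3/2) by ring, Real.rpow_add hg0, Real.rpow_one]]
    ring
  have hDen : (∫ g in Ioi (0:ℝ), jointDensity τ a γbar μ σ lam g)
      = (Real.exp ((lam - γbar * a) * μ / σ ^ 2) /
          (Real.sqrt (2 * π * σ ^ 2) * Real.Gamma (τ * a))) *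
        Jf (τ * a - 3/2) ((2 * σ ^ 2 + μ ^ 2) / (2 * σ ^ 2))
          ((lam - γbar * a) ^ 2 / (2 * σ ^ 2)) := by
    unfold Jf
    rw [← integral_const_mul]
    refine setIntegral_congr_fun measurableSet_Ioi (fun g hg => ?_)
    have hg0 : (0:ℝ) < g := hg
    rw [jointDensity_eq τ a γbar μ σ hσ hΓt.ne' lam hg0]
  unfold condMeanGamma
  rw [hNum, hDen, mul_div_mul_left _ _ hCpos.ne']

lemma btend {x0 s : ℝ} (hs : 0 < s) :
    Tendsto (fun lam : ℝ => (lam - x0) ^ 2 / s) (𝓝[≠] x0) (𝓝 0) := by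
  have hcont : Continuous fun lam : ℝ => (lam - x0) ^ 2 / s := by fun_prop
  have h0 : (x0 - x0) ^ 2 / s = 0 := by simp
  exact (h0 ▸ hcont.tendsto x0).mono_left nhdsWithin_le_nhds

lemma case2 {x0 s m t : ℝ} (hs : 0 < s) (hm : 0 < m) (ht : 1/2 < t) :
    Tendsto (fun lam : ℝ => Jf (t - 1/2) (m/s) ((lam - x0) ^ 2 / s) /
        Jf (t - 3/2) (m/s) ((lam - x0) ^ 2 / s))
      (𝓝[≠] x0) (𝓝 ((t - 1/2) * s / m)) := by
  have hc : 0 < m / s := div_pos hm hs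
  have hb0 : ∀ lam : ℝ, 0 ≤ (lam - x0) ^ 2 / s := fun lam => by positivity
  have hJn := tendstoJ hb0 (btend hs) (show (-1:ℝ) < t - 1/2 by linarith) hc
  have hJd := tendstoJ hb0 (btend hs) (show (-1:ℝ) < t - 3/2 by linarith) hc
  have hΓd : 0 < Real.Gamma (t - 3/2 + 1) := Real.Gamma_pos_of_pos (by linarith)
  have hXd : (0:ℝ) < (1/(m/s)) ^ (t - 3/2 + 1) := Real.rpow_pos_of_pos (by positivity) _
  have hdpos : 0 < Real.Gamma (t - 3/2 + 1) * (1/(m/s)) ^ (t - 3/2 + 1) := mul_pos hΓd hXd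
  have h := hJn.div hJd hdpos.ne'
  have hval : Real.Gamma (t - 1/2 + 1) * (1/(m/s)) ^ (t - 1/2 + 1) /
      (Real.Gamma (t - 3/2 + 1) * (1/(m/s)) ^ (t - 3/2 + 1)) = (t - 1/2) * s / m := by
    rw [show t - 1/2 + 1 = (t - 3/2 + 1) + 1 by ring,
      Real.Gamma_add_one (show t - 3/2 + 1 ≠ 0 by intro h'; nlinarith),
      Real.rpow_add (by positivity), Real.rpow_one, one_div_div]
    have hX : (0:ℝ) < (s/m) ^ (t - 3/2 + 1) := Real.rpow_pos_of_pos (by positivity) _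
    have h1 : Real.Gamma (t - 3/2 + 1) * (s/m) ^ (t - 3/2 + 1) /
        (Real.Gamma (t - 3/2 + 1) * (s/m) ^ (t - 3/2 + 1)) = 1 :=
      div_self (mul_pos hΓd hX).ne'
    linear_combination ((t - 3/2 + 1) * (s/m)) * h1
  rw [hval] at h
  exact h

lemma case1 {x0 s m t : ℝ} (hs : 0 < s) (hm : 0 < m) (ht : 0 < t) (h1 : t < 1/2) :
    Tendsto (fun lam : ℝ => Jf (t - 1/2) (m/s) ((lam - x0) ^ 2 / s) /
        Jf (t - 3/2) (m/s) ((lam - x0) ^ 2 / s) /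
        (Real.Gamma (t + 1/2) / Real.Gamma (1/2 - t) * (s ^ (2*t) / m ^ ((2*t + 1)/2)) *
          |lam - x0| ^ (1 - 2*t)))
      (𝓝[≠] x0) (𝓝 1) := by
  have hc : 0 < m / s := div_pos hm hs
  have hb0 : ∀ lam : ℝ, 0 ≤ (lam - x0) ^ 2 / s := fun lam => by positivity
  have hΓ1 : 0 < Real.Gamma (t + 1/2) := Real.Gamma_pos_of_pos (by linarith)
  have hΓ2 : 0 < Real.Gamma (1/2 - t) := Real.Gamma_pos_of_pos (by linarith)
  have hJn := tendstoJ hb0 (btend hs) (show (-1:ℝ) < t - 1/2 by linarith) hc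
  have hψ0 : ∀ lam : ℝ, 0 ≤ m/s * ((lam - x0) ^ 2 / s) := fun lam => by positivity
  have hψ : Tendsto (fun lam : ℝ => m/s * ((lam - x0) ^ 2 / s)) (𝓝[≠] x0) (𝓝 0) := by
    simpa using (btend hs (x0 := x0)).const_mul (m/s)
  have hG := tendstoG hψ0 hψ (show t - 3/2 < -1 by linarith)
  rw [show -(t - 3/2) - 1 = 1/2 - t by ring] at hG
  have hK2pos : 0 < Real.Gamma (t + 1/2) / Real.Gamma (1/2 - t) *
      (s ^ (2*t) / m ^ ((2*t + 1)/2)) * s ^ (1/2 - t) :=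
    mul_pos (mul_pos (div_pos hΓ1 hΓ2)
      (div_pos (Real.rpow_pos_of_pos hs _) (Real.rpow_pos_of_pos hm _)))
      (Real.rpow_pos_of_pos hs _)
  have hden : Tendsto (fun lam : ℝ => Gf (t - 3/2) (m/s) ((lam - x0) ^ 2 / s) *
      (Real.Gamma (t + 1/2) / Real.Gamma (1/2 - t) * (s ^ (2*t) / m ^ ((2*t + 1)/2)) *
        s ^ (1/2 - t))) (𝓝[≠] x0)
      (𝓝 (Real.Gamma (1/2 - t) * (Real.Gamma (t + 1/2) / Real.Gamma (1/2 - t) *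
        (s ^ (2*t) / m ^ ((2*t + 1)/2)) * s ^ (1/2 - t)))) := hG.mul_const _
  have hmain := hJn.div hden (ne_of_gt (mul_pos hΓ2 hK2pos))
  have hone : Real.Gamma (t - 1/2 + 1) * (1/(m/s)) ^ (t - 1/2 + 1) /
      (Real.Gamma (1/2 - t) * (Real.Gamma (t + 1/2) / Real.Gamma (1/2 - t) *
        (s ^ (2*t) / m ^ ((2*t + 1)/2)) * s ^ (1/2 - t))) = 1 := by
    have hAeq : Real.Gamma (t - 1/2 + 1) * (1/(m/s)) ^ (t - 1/2 + 1)
        = Real.Gamma (1/2 - t) * (Real.Gamma (t + 1/2) / Real.Gamma (1/2 - t) *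
          (s ^ (2*t) / m ^ ((2*t + 1)/2)) * s ^ (1/2 - t)) := by
      rw [show t - 1/2 + 1 = t + 1/2 by ring, one_div_div,
        Real.div_rpow hs.le hm.le, show (2*t + 1)/2 = t + 1/2 by ring,
        show s ^ (t + 1/2) = s ^ (2*t) * s ^ (1/2 - t) by
          rw [← Real.rpow_add hs]; congr 1; ring]
      have h1 : Real.Gamma (1/2 - t) / Real.Gamma (1/2 - t) = 1 := div_self hΓ2.ne'
      linear_combination (-(Real.Gamma (t + 1/2) * s ^ (2*t) * s ^ (1/2 - t) /
        m ^ (t + 1/2))) * h1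
    rw [hAeq, div_self (mul_pos hΓ2 hK2pos).ne']
  rw [hone] at hmain
  refine Tendsto.congr' ?_ hmain
  filter_upwards [self_mem_nhdsWithin] with lam hlam
  have hδ : lam - x0 ≠ 0 := sub_ne_zero.mpr hlam
  have habs : 0 < |lam - x0| := abs_pos.mpr hδ
  have hsq : 0 < (lam - x0) ^ 2 := lt_of_le_of_ne (sq_nonneg _) (Ne.symm (pow_ne_zero 2 hδ))
  have hb : 0 < (lam - x0) ^ 2 / s := div_pos hsq hs
  have hkey : ((lam - x0) ^ 2 / s) ^ (t - 3/2 + 1) * |lam - x0| ^ (1 - 2*t)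
      = s ^ (1/2 - t) := by
    have e0 : (lam - x0) ^ 2 / s = |lam - x0| ^ (2:ℝ) / s := by
      rw [show ((2:ℝ)) = ((2:ℕ):ℝ) by norm_num, Real.rpow_natCast, sq_abs]
    calc ((lam - x0) ^ 2 / s) ^ (t - 3/2 + 1) * |lam - x0| ^ (1 - 2*t)
        = (|lam - x0| ^ (2:ℝ)) ^ (t - 3/2 + 1) / s ^ (t - 3/2 + 1) *
            |lam - x0| ^ (1 - 2*t) := by
          rw [e0, Real.div_rpow (Real.rpow_nonneg (abs_nonneg _) _) hs.le]
      _ = |lam - x0| ^ ((2:ℝ) * (t - 3/2 + 1)) / s ^ (t - 3/2 + 1) *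
            |lam - x0| ^ (1 - 2*t) := by rw [← Real.rpow_mul (abs_nonneg _)]
      _ = |lam - x0| ^ ((2:ℝ) * (t - 3/2 + 1) + (1 - 2*t)) / s ^ (t - 3/2 + 1) := by
          rw [div_mul_eq_mul_div, ← Real.rpow_add habs]
      _ = s ^ (1/2 - t) := by
          rw [show (2:ℝ) * (t - 3/2 + 1) + (1 - 2*t) = 0 by ring, Real.rpow_zero,
            show (1:ℝ)/2 - t = -(t - 3/2 + 1) by ring, Real.rpow_neg hs.le, one_div]
  simp only [Pi.div_apply]
  show Jf (t - 1/2) (m/s) ((lam - x0) ^ 2 / s) /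
      (Gf (t - 3/2) (m/s) ((lam - x0) ^ 2 / s) *
        (Real.Gamma (t + 1/2) / Real.Gamma (1/2 - t) * (s ^ (2*t) / m ^ ((2*t + 1)/2)) *
          s ^ (1/2 - t)))
    = Jf (t - 1/2) (m/s) ((lam - x0) ^ 2 / s) / Jf (t - 3/2) (m/s) ((lam - x0) ^ 2 / s) /
      (Real.Gamma (t + 1/2) / Real.Gamma (1/2 - t) * (s ^ (2*t) / m ^ ((2*t + 1)/2)) *
        |lam - x0| ^ (1 - 2*t))
  rw [Jf_decomp (t - 3/2) (m/s) hb, div_div]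
  congr 1
  linear_combination (-(Gf (t - 3/2) (m/s) ((lam - x0) ^ 2 / s) *
    (Real.Gamma (t + 1/2) / Real.Gamma (1/2 - t) * (s ^ (2*t) / m ^ ((2*t + 1)/2))))) * hkey

/-- Small-`|λ − γ̄a|` behaviour of `E[Γ | Λ = λ]`: if `τa < 1/2`, then
`E[Γ | Λ = λ] = (Γ(τa+1/2)/Γ(1/2−τa)) (2σ²)^{2τa} (2σ²+μ²)^{−(2τa+1)/2}`
`· |λ − γ̄a|^{1−2τa} (1 + o(1))` as `λ → γ̄a`, while if `τa > 1/2` it converges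
to `(τa − 1/2)·2σ²/(2σ²+μ²)`. -/
theorem condMeanGamma_asymptotics (τ a γbar μ σ : ℝ)
    (hτ : 0 < τ) (ha : 0 < a) (hσ : 0 < σ) :
    (τ * a < 1 / 2 →
      Tendsto (fun lam =>
          condMeanGamma τ a γbar μ σ lam /
            (Real.Gamma (τ * a + 1 / 2) / Real.Gamma (1 / 2 - τ * a) *
              ((2 * σ ^ 2) ^ (2 * (τ * a)) /
                (2 * σ ^ 2 + μ ^ 2) ^ ((2 * (τ * a) + 1) / 2)) *
              |lam - γbar * a| ^ (1 - 2 * (τ * a))))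
        (𝓝[≠] (γbar * a)) (𝓝 1)) ∧
    (1 / 2 < τ * a →
      Tendsto (fun lam => condMeanGamma τ a γbar μ σ lam)
        (𝓝[≠] (γbar * a)) (𝓝 ((τ * a - 1 / 2) * (2 * σ ^ 2) / (2 * σ ^ 2 + μ ^ 2)))) := by
  have ht : 0 < τ * a := mul_pos hτ ha
  have hs : (0:ℝ) < 2 * σ ^ 2 := by positivity
  have hm : (0:ℝ) < 2 * σ ^ 2 + μ ^ 2 := by positivity
  constructor
  · intro h1
    refine (case1 (x0 := γbar * a) hs hm ht h1).congr (fun lam => ?_)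
    rw [condMean_eq τ a γbar μ σ hτ ha hσ lam]
  · intro h2
    refine (case2 (x0 := γbar * a) hs hm h2).congr (fun lam => ?_)
    rw [condMean_eq τ a γbar μ σ hτ ha hσ lam]
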